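/- Existence of a convex decomposition of f(x) = (1/2)xᵀΓx − hᵀx implies walk-summability of Γ, i.e., the spectral radius of |I − Γ| is less than 1. -/

import Mathlib

open Classical Finset Matrix

noncomputable section

/-- `i` and `j` are adjacent: there is an edge `(i,j) ∈ E` (recall `Γᵢⱼ = 0` off edges). -/
def Adj {n : ℕ} (Γ : Matrix (Fin n) (Fin n) ℝ) (i j : Fin n) : Prop :=
  i ≠ j ∧ Γ i j ≠ 0

/-- The quadratic objective `f(x) = (1/2) xᵀ Γ x − hᵀ x`. -/
def quadObj {n : ℕ} (Γ : Matrix (Fin n) (Fin n) ℝ) (h : Fin n → ℝ)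
    (x : Fin n → ℝ) : ℝ :=
  (1 / 2) * (x ⬝ᵥ Γ.mulVec x) - h ⬝ᵥ x

/-- A convex decomposition of `f`: strictly convex quadratic single-vertex functions and
convex quadratic pairwise functions, over vertices and edges, summing to `f`. -/
def ConvexDecomposable {n : ℕ} (Γ : Matrix (Fin n) (Fin n) ℝ) (h : Fin n → ℝ) : Prop :=
  ∃ (Fi : Fin n → ℝ → ℝ) (Fij : Fin n → Fin n → ℝ → ℝ → ℝ),
    (∀ i, (∃ a b c : ℝ, ∀ x, Fi i x = a * x ^ 2 + b * x + c) ∧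
      StrictConvexOn ℝ Set.univ (Fi i)) ∧
    (∀ i j, Adj Γ i j →
      ((∃ a b c d e k : ℝ, ∀ x y, Fij i j x y =
          a * x ^ 2 + b * x * y + c * y ^ 2 + d * x + e * y + k) ∧
        ConvexOn ℝ Set.univ (fun p : ℝ × ℝ => Fij i j p.1 p.2))) ∧
    (∀ x : Fin n → ℝ, quadObj Γ h x =
      ∑ i, Fi i (x i) +
        ∑ p ∈ Finset.univ.filter (fun p : Fin n × Fin n => Adj Γ p.1 p.2 ∧ p.1 < p.2),
          Fij p.1 p.2 (x p.1) (x p.2))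

open Classical in
lemma quad_expand {n : ℕ} (Γ M : Matrix (Fin n) (Fin n) ℝ)
    (hMsym : ∀ i j, M i j = M j i)
    (hz : ∀ i j, i ≠ j → ¬ Adj Γ i j → M i j = 0) (y : Fin n → ℝ) :
    y ⬝ᵥ M.mulVec y = (∑ i, M i i * y i ^ 2) +
      2 * ∑ p ∈ Finset.univ.filter (fun p : Fin n × Fin n => Adj Γ p.1 p.2 ∧ p.1 < p.2),
        M p.1 p.2 * y p.1 * y p.2 := by
  classical
  set F : Fin n × Fin n → ℝ := fun p => M p.1 p.2 * y p.1 * y p.2 with hF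
  have h0 : y ⬝ᵥ M.mulVec y = ∑ p ∈ (univ ×ˢ univ : Finset (Fin n × Fin n)), F p := by
    rw [Finset.sum_product]
    simp only [dotProduct, mulVec, Finset.mul_sum, hF]
    exact Finset.sum_congr rfl fun i _ => Finset.sum_congr rfl fun j _ => by ring
  rw [h0]
  rw [← Finset.sum_filter_add_sum_filter_not (univ ×ˢ univ) (fun p => p.1 = p.2) F]
  congr 1
  · -- diagonal part
    rw [Finset.sum_filter]
    rw [Finset.sum_product]
    refine Finset.sum_congr rfl fun i _ => ?_
    simp only [hF]
    rw [Finset.sum_ite_eq univ i (fun j => M i j * y i * y j)]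
    simp
    ring
  · -- offdiagonal part
    rw [← Finset.sum_filter_add_sum_filter_not
      ((univ ×ˢ univ).filter (fun p => ¬ p.1 = p.2)) (fun p => p.1 < p.2) F]
    have e1 : ((univ ×ˢ univ).filter (fun p => ¬ p.1 = p.2)).filter (fun p : Fin n × Fin n => p.1 < p.2)
        = (univ ×ˢ univ).filter (fun p : Fin n × Fin n => p.1 < p.2) := by
      rw [Finset.filter_filter]
      exact Finset.filter_congr fun p _ => by
        constructor
        · exact fun h => h.2
        · exact fun h => ⟨ne_of_lt h, h⟩
    have e2 : ((univ ×ˢ univ).filter (fun p => ¬ p.1 = p.2)).filter (fun p : Fin n × Fin n => ¬ p.1 < p.2)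
        = (univ ×ˢ univ).filter (fun p : Fin n × Fin n => p.2 < p.1) := by
      rw [Finset.filter_filter]
      exact Finset.filter_congr fun p _ => by
        constructor
        · rintro ⟨h1, h2⟩; exact lt_of_le_of_ne (not_lt.1 h2) (Ne.symm h1)
        · exact fun h => ⟨(ne_of_lt h).symm, not_lt.2 (le_of_lt h)⟩
    rw [e1, e2]
    have e3 : ∑ p ∈ (univ ×ˢ univ).filter (fun p : Fin n × Fin n => p.2 < p.1), F p
        = ∑ p ∈ (univ ×ˢ univ).filter (fun p : Fin n × Fin n => p.1 < p.2), F p := by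
      refine Finset.sum_nbij' Prod.swap Prod.swap ?_ ?_ ?_ ?_ ?_
      · intro p hp; simp only [Finset.mem_filter, Finset.mem_product] at hp ⊢
        exact ⟨⟨Finset.mem_univ _, Finset.mem_univ _⟩, hp.2⟩
      · intro p hp; simp only [Finset.mem_filter, Finset.mem_product] at hp ⊢
        exact ⟨⟨Finset.mem_univ _, Finset.mem_univ _⟩, hp.2⟩
      · intro p _; rfl
      · intro p _; rfl
      · intro p _; simp only [hF, Prod.fst_swap, Prod.snd_swap]
        rw [hMsym]; ring
    have e4 : ∑ p ∈ (univ ×ˢ univ).filter (fun p : Fin n × Fin n => p.1 < p.2), F p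
        = ∑ p ∈ Finset.univ.filter (fun p : Fin n × Fin n => Adj Γ p.1 p.2 ∧ p.1 < p.2), F p := by
      rw [← Finset.univ_product_univ]
      refine (Finset.sum_subset ?_ ?_).symm
      · intro p hp; simp only [Finset.mem_filter] at hp ⊢
        exact ⟨hp.1, hp.2.2⟩
      · intro p hp hnp
        simp only [Finset.mem_filter] at hp hnp
        have hne : p.1 ≠ p.2 := ne_of_lt hp.2
        have : ¬ Adj Γ p.1 p.2 := fun hA => hnp ⟨hp.1, hA, hp.2⟩
        simp [hF, hz p.1 p.2 hne this]
    rw [e3, e4]; ring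


theorem extract {n : ℕ} (Γ : Matrix (Fin n) (Fin n) ℝ) (h : Fin n → ℝ)
    (hcd : ConvexDecomposable Γ h) :
    ∃ (A : Fin n → ℝ) (α β γ : Fin n → Fin n → ℝ),
      (∀ i, 0 < A i) ∧
      (∀ i j, Adj Γ i j → ∀ u v, 0 ≤ α i j * u^2 + β i j * u * v + γ i j * v^2) ∧
      (∀ x : Fin n → ℝ, x ⬝ᵥ Γ.mulVec x =
        2 * ∑ i, A i * (x i)^2 +
        2 * ∑ p ∈ Finset.univ.filter (fun p : Fin n × Fin n => Adj Γ p.1 p.2 ∧ p.1 < p.2),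
          (α p.1 p.2 * (x p.1)^2 + β p.1 p.2 * (x p.1) * (x p.2) + γ p.1 p.2 * (x p.2)^2)) := by
  obtain ⟨Fi, Fij, h1, h2, h3⟩ := hcd
  choose A B C hF using fun i => (h1 i).1
  choose! α β γ d e k hFij using fun i j (hadj : Adj Γ i j) => (h2 i j hadj).1
  refine ⟨A, α, β, γ, ?_, ?_, ?_⟩
  · intro i
    have hsc : StrictConvexOn ℝ Set.univ (fun x : ℝ => A i * x^2 + B i * x + C i) := by
      have : (fun x : ℝ => A i * x^2 + B i * x + C i) = Fi i := funext fun x => (hF i x).symm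
      rw [this]; exact (h1 i).2
    have := hsc.2 (Set.mem_univ (1:ℝ)) (Set.mem_univ (-1:ℝ)) (by norm_num)
      (by norm_num : (0:ℝ) < 1/2) (by norm_num : (0:ℝ) < 1/2) (by norm_num)
    simp only [smul_eq_mul] at this
    nlinarith [this]
  · intro i j hadj u v
    have hc : ConvexOn ℝ Set.univ (fun p : ℝ×ℝ =>
        α i j * p.1^2 + β i j * p.1 * p.2 + γ i j * p.2^2 + d i j * p.1 + e i j * p.2 + k i j) := by
      have : (fun p : ℝ×ℝ =>
          α i j * p.1^2 + β i j * p.1 * p.2 + γ i j * p.2^2 + d i j * p.1 + e i j * p.2 + k i j)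
          = fun p : ℝ×ℝ => Fij i j p.1 p.2 := funext fun p => (hFij i j hadj p.1 p.2).symm
      rw [this]; exact (h2 i j hadj).2
    have := hc.2 (Set.mem_univ (u,v)) (Set.mem_univ (-u,-v))
      (by norm_num : (0:ℝ) ≤ 1/2) (by norm_num : (0:ℝ) ≤ 1/2) (by norm_num)
    simp only [Prod.smul_def, Prod.fst_add, Prod.snd_add, smul_eq_mul, Prod.smul_fst,
      Prod.smul_snd] at this
    nlinarith [this]
  · intro x
    have e1 := h3 x
    have e2 := h3 (-x)
    have e0 := h3 0
    simp only [quadObj] at e1 e2 e0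
    have hL : x ⬝ᵥ Γ.mulVec x =
        ((1/2) * (x ⬝ᵥ Γ.mulVec x) - h ⬝ᵥ x) + ((1/2) * ((-x) ⬝ᵥ Γ.mulVec (-x)) - h ⬝ᵥ (-x))
          - 2 * ((1/2) * ((0 : Fin n → ℝ) ⬝ᵥ Γ.mulVec 0) - h ⬝ᵥ (0 : Fin n → ℝ)) := by
      simp [Matrix.mulVec_neg, dotProduct_neg, neg_dotProduct, Matrix.mulVec_zero]
      ring
    rw [hL, e1, e2, e0]
    have comb1 : ∀ {ι : Type} (s : Finset ι) (f g q : ι → ℝ),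
        (∑ i ∈ s, f i) + (∑ i ∈ s, g i) - 2 * (∑ i ∈ s, q i) = ∑ i ∈ s, (f i + g i - 2 * q i) := by
      intro ι s f g q
      rw [Finset.sum_add_distrib.symm, Finset.mul_sum, ← Finset.sum_sub_distrib]
    have S1 : (∑ i, Fi i (x i)) + (∑ i, Fi i ((-x) i)) - 2*(∑ i, Fi i ((0 : Fin n → ℝ) i))
        = ∑ i, 2 * (A i * (x i)^2) := by
      rw [comb1]
      refine Finset.sum_congr rfl fun i _ => ?_
      simp only [hF, Pi.neg_apply, Pi.zero_apply]
      ring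
    have S2 : (∑ p ∈ Finset.univ.filter (fun p : Fin n × Fin n => Adj Γ p.1 p.2 ∧ p.1 < p.2),
          Fij p.1 p.2 (x p.1) (x p.2))
        + (∑ p ∈ Finset.univ.filter (fun p : Fin n × Fin n => Adj Γ p.1 p.2 ∧ p.1 < p.2),
          Fij p.1 p.2 ((-x) p.1) ((-x) p.2))
        - 2*(∑ p ∈ Finset.univ.filter (fun p : Fin n × Fin n => Adj Γ p.1 p.2 ∧ p.1 < p.2),
          Fij p.1 p.2 ((0 : Fin n → ℝ) p.1) ((0 : Fin n → ℝ) p.2))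
        = ∑ p ∈ Finset.univ.filter (fun p : Fin n × Fin n => Adj Γ p.1 p.2 ∧ p.1 < p.2),
          2 * (α p.1 p.2 * (x p.1)^2 + β p.1 p.2 * (x p.1) * (x p.2) + γ p.1 p.2 * (x p.2)^2) := by
      rw [comb1]
      refine Finset.sum_congr rfl fun p hp => ?_
      have hadj := (Finset.mem_filter.1 hp).2.1
      simp only [hFij _ _ hadj, Pi.neg_apply, Pi.zero_apply]
      ring
    rw [Finset.mul_sum, Finset.mul_sum]
    linarith [S1, S2]

theorem cross_coeff {n : ℕ} (Γ : Matrix (Fin n) (Fin n) ℝ) (hsym : Γ.IsSymm)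
    (A : Fin n → ℝ) (α β γ : Fin n → Fin n → ℝ)
    (hKEY : ∀ x : Fin n → ℝ, x ⬝ᵥ Γ.mulVec x =
        2 * ∑ i, A i * (x i)^2 +
        2 * ∑ p ∈ Finset.univ.filter (fun p : Fin n × Fin n => Adj Γ p.1 p.2 ∧ p.1 < p.2),
          (α p.1 p.2 * (x p.1)^2 + β p.1 p.2 * (x p.1) * (x p.2) + γ p.1 p.2 * (x p.2)^2))
    (p : Fin n × Fin n)
    (hp : p ∈ Finset.univ.filter (fun p : Fin n × Fin n => Adj Γ p.1 p.2 ∧ p.1 < p.2)) :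
    β p.1 p.2 = Γ p.1 p.2 := by
  classical
  obtain ⟨-, hadj, hlt⟩ := Finset.mem_filter.1 hp
  set i := p.1
  set j := p.2
  have hij : i ≠ j := ne_of_lt hlt
  set xp : Fin n → ℝ := fun t => (if t = i then (1:ℝ) else 0) + (if t = j then (1:ℝ) else 0)
    with hxp
  set xm : Fin n → ℝ := fun t => (if t = i then (1:ℝ) else 0) - (if t = j then (1:ℝ) else 0)
    with hxm
  have vpi : xp i = 1 := by simp [hxp, hij]
  have vpj : xp j = 1 := by simp [hxp, hij.symm]
  have vmi : xm i = 1 := by simp [hxm, hij]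
  have vmj : xm j = -1 := by simp [hxm, hij.symm]
  have vp0 : ∀ t, t ≠ i → t ≠ j → xp t = 0 := fun t h1 h2 => by simp [hxp, h1, h2]
  have vm0 : ∀ t, t ≠ i → t ≠ j → xm t = 0 := fun t h1 h2 => by simp [hxm, h1, h2]
  have sq_eq : ∀ t, (xm t)^2 = (xp t)^2 := by
    intro t
    rcases eq_or_ne t i with rfl | h1
    · rw [vpi, vmi]
    · rcases eq_or_ne t j with rfl | h2
      · rw [vpj, vmj]; ring
      · rw [vp0 t h1 h2, vm0 t h1 h2]
  -- quadratic form values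
  have qform : ∀ x : Fin n → ℝ, x ⬝ᵥ Γ.mulVec x
      = ∑ s, ∑ t, x s * (Γ s t * x t) := by
    intro x; simp only [dotProduct, mulVec, Finset.mul_sum]
  have hq : ∀ x : Fin n → ℝ, (∀ t, t ≠ i → t ≠ j → x t = 0) →
      x ⬝ᵥ Γ.mulVec x = x i * (Γ i i * x i) + x i * (Γ i j * x j)
        + x j * (Γ j i * x i) + x j * (Γ j j * x j) := by
    intro x hx
    have router : (∑ s, ∑ t, x s * (Γ s t * x t))
        = (∑ t, x i * (Γ i t * x t)) + (∑ t, x j * (Γ j t * x t)) :=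
      Finset.sum_eq_add_of_mem i j (Finset.mem_univ i) (Finset.mem_univ j) hij
        (fun s _ hs => Finset.sum_eq_zero fun t _ => by rw [hx s hs.1 hs.2, zero_mul])
    have inner_i : (∑ t, x i * (Γ i t * x t)) = x i * (Γ i i * x i) + x i * (Γ i j * x j) :=
      Finset.sum_eq_add_of_mem i j (Finset.mem_univ i) (Finset.mem_univ j) hij
        (fun t _ ht => by rw [hx t ht.1 ht.2, mul_zero, mul_zero])
    have inner_j : (∑ t, x j * (Γ j t * x t)) = x j * (Γ j i * x i) + x j * (Γ j j * x j) :=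
      Finset.sum_eq_add_of_mem i j (Finset.mem_univ i) (Finset.mem_univ j) hij
        (fun t _ ht => by rw [hx t ht.1 ht.2, mul_zero, mul_zero])
    rw [qform, router, inner_i, inner_j]
    ring
  have hsymm : Γ j i = Γ i j := by
    have := congrFun (congrFun hsym i) j
    simpa [Matrix.IsSymm] using (Matrix.IsSymm.apply hsym i j)
  have h1 := hKEY xp
  have h2 := hKEY xm
  rw [hq xp vp0] at h1
  rw [hq xm vm0] at h2
  rw [vpi, vpj] at h1
  rw [vmi, vmj] at h2
  -- A-sums are equal
  have hSA : ∑ t, A t * (xm t)^2 = ∑ t, A t * (xp t)^2 :=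
    Finset.sum_congr rfl fun t _ => by rw [sq_eq]
  rw [hSA] at h2
  -- edge sums difference
  have hSE : ∑ q ∈ Finset.univ.filter (fun q : Fin n × Fin n => Adj Γ q.1 q.2 ∧ q.1 < q.2),
        ((α q.1 q.2 * (xp q.1)^2 + β q.1 q.2 * (xp q.1) * (xp q.2) + γ q.1 q.2 * (xp q.2)^2)
        - (α q.1 q.2 * (xm q.1)^2 + β q.1 q.2 * (xm q.1) * (xm q.2) + γ q.1 q.2 * (xm q.2)^2))
      = 2 * β i j := by
    rw [Finset.sum_eq_single_of_mem p hp]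
    · rw [vpi, vpj, vmi, vmj]; ring
    · intro q hq' hqp
      obtain ⟨-, qadj, qlt⟩ := Finset.mem_filter.1 hq'
      have goal2 : xp q.1 * xp q.2 = xm q.1 * xm q.2 → (α q.1 q.2 * (xp q.1)^2 + β q.1 q.2 * (xp q.1) * (xp q.2) + γ q.1 q.2 * (xp q.2)^2 - (α q.1 q.2 * (xm q.1)^2 + β q.1 q.2 * (xm q.1) * (xm q.2) + γ q.1 q.2 * (xm q.2)^2)) = 0 := by
        intro hcross
        rw [sq_eq q.1, sq_eq q.2]
        linear_combination (β q.1 q.2) * hcross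
      apply goal2
      rcases eq_or_ne q.2 j with h2j | h2j
      · rcases eq_or_ne q.1 i with h1i | h1i
        · exfalso; exact hqp (Prod.ext h1i h2j)
        · have h1j : q.1 ≠ j := by
            intro hh
            rw [hh, h2j] at qlt
            exact lt_irrefl _ qlt
          rw [vp0 q.1 h1i h1j, vm0 q.1 h1i h1j, zero_mul, zero_mul]
      · rcases eq_or_ne q.1 j with h1j | h1j
        · have h2i : q.2 ≠ i := ne_of_gt (hlt.trans (h1j ▸ qlt))
          rw [vp0 q.2 h2i h2j, vm0 q.2 h2i h2j, mul_zero, mul_zero]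
        · have e1 : xm q.1 = xp q.1 := by simp [hxm, hxp, h1j]
          have e2 : xm q.2 = xp q.2 := by simp [hxm, hxp, h2j]
          rw [e1, e2]
  rw [Finset.sum_sub_distrib] at hSE
  have hbeta : (2:ℝ) * (2 * β i j) = 4 * Γ i j := by
    nlinarith [h1, h2, hSE, hsymm]
  linarith [hbeta]

theorem spec_bound {n : ℕ} (N : Matrix (Fin n) (Fin n) ℝ) (hNsym : N.IsHermitian)
    (hbound : ∀ a b : Fin n → ℝ,
      |a ⬝ᵥ N.mulVec a + b ⬝ᵥ N.mulVec b| < ∑ i, (a i ^ 2 + b i ^ 2) ∨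
        (a = 0 ∧ b = 0)) :
    spectralRadius ℂ (N.map Complex.ofReal) < 1 := by
  classical
  set Nc : Matrix (Fin n) (Fin n) ℂ := N.map Complex.ofReal with hNc
  have hherm : Nc.IsHermitian :=
    hNsym.map Complex.ofReal (fun x => (Complex.conj_ofReal x).symm ▸ by simp [Complex.conj_ofReal])
  -- spectrum identification
  have hspec : spectrum ℂ Nc = Set.range (RCLike.ofReal ∘ hherm.eigenvalues) := by
    conv_lhs => rw [hherm.spectral_theorem, Unitary.conjStarAlgAut_apply, Unitary.spectrum_star_right_conjugate, spectrum_diagonal]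
  -- eigenvalue bound
  have hev : ∀ i : Fin n, |hherm.eigenvalues i| < 1 := by
    intro i
    set v : Fin n → ℂ := ⇑(hherm.eigenvectorBasis i) with hvdef
    have hv : Nc *ᵥ v = hherm.eigenvalues i • v := hherm.mulVec_eigenvectorBasis i
    have vne : v ≠ 0 := by
      intro hv0
      exact hherm.eigenvectorBasis.orthonormal.ne_zero i (by ext t; exact congrFun hv0 t)
    set a : Fin n → ℝ := fun t => (v t).re with hadef
    set b : Fin n → ℝ := fun t => (v t).im with hbdef
    have habne : ¬ (a = 0 ∧ b = 0) := by
      rintro ⟨ha0, hb0⟩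
      apply vne
      funext t
      have h1 : (v t).re = 0 := congrFun ha0 t
      have h2 : (v t).im = 0 := congrFun hb0 t
      exact Complex.ext h1 h2
    -- real part computations
    have hre1 : (star v ⬝ᵥ Nc *ᵥ v).re = a ⬝ᵥ N.mulVec a + b ⬝ᵥ N.mulVec b := by
      simp only [dotProduct, mulVec, Finset.mul_sum, Pi.star_apply]
      rw [Complex.re_sum, ← Finset.sum_add_distrib]
      refine Finset.sum_congr rfl fun s _ => ?_
      rw [Complex.re_sum, ← Finset.sum_add_distrib]
      refine Finset.sum_congr rfl fun t _ => ?_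
      simp only [hNc, Matrix.map_apply, RCLike.star_def]
      simp [Complex.mul_re, Complex.mul_im, hadef, hbdef]
      try ring
    have hre2 : (star v ⬝ᵥ v).re = ∑ t, (a t ^ 2 + b t ^ 2) := by
      simp only [dotProduct, Pi.star_apply]
      rw [Complex.re_sum]
      refine Finset.sum_congr rfl fun t _ => ?_
      simp [Complex.mul_re, hadef, hbdef]
      try ring
    have heig : (star v ⬝ᵥ Nc *ᵥ v).re = hherm.eigenvalues i * (star v ⬝ᵥ v).re := by
      rw [hv]
      rw [dotProduct_smul]
      rw [Complex.real_smul, Complex.mul_re]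
      simp
    have hb := hbound a b
    rcases hb with hb | hb
    · -- |ev| < 1
      set S : ℝ := ∑ t, (a t ^ 2 + b t ^ 2) with hSdef
      have hS1 : hherm.eigenvalues i * S = a ⬝ᵥ N.mulVec a + b ⬝ᵥ N.mulVec b := by
        rw [← hre1, heig, hre2]
      have hSpos : 0 < S := lt_of_le_of_lt (abs_nonneg _) hb
      have habs : |hherm.eigenvalues i| * S = |hherm.eigenvalues i * S| := by
        rw [abs_mul, abs_of_pos hSpos]
      have : |hherm.eigenvalues i| * S < 1 * S := by
        rw [one_mul, habs, hS1]
        exact hb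
      exact lt_of_mul_lt_mul_right this (le_of_lt hSpos)
    · exact absurd hb habne
  -- conclude
  show (⨆ k ∈ spectrum ℂ Nc, (‖k‖₊ : ENNReal)) < 1
  rw [hspec, iSup_range]
  rcases Nat.eq_zero_or_pos n with rfl | hn
  · simp only [iSup_of_empty]
    exact zero_lt_one
  · haveI : Nonempty (Fin n) := Fin.pos_iff_nonempty.1 hn
    set m : NNReal := Finset.univ.sup fun i => ‖(RCLike.ofReal (hherm.eigenvalues i) : ℂ)‖₊ with hm
    have hle : (⨆ i, (‖(RCLike.ofReal (hherm.eigenvalues i) : ℂ)‖₊ : ENNReal)) ≤ (m : ENNReal) := by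
      refine iSup_le fun i => ENNReal.coe_le_coe.2 ?_
      exact Finset.le_sup (f := fun i => ‖(RCLike.ofReal (hherm.eigenvalues i) : ℂ)‖₊)
        (Finset.mem_univ i)
    have hmlt : m < 1 := by
      rw [hm, Finset.sup_lt_iff (by norm_num : (⊥ : NNReal) < 1)]
      intro i _
      have : ‖(RCLike.ofReal (hherm.eigenvalues i) : ℂ)‖₊ = ‖hherm.eigenvalues i‖₊ := by
        apply NNReal.coe_injective
        simp [coe_nnnorm, RCLike.norm_ofReal, Real.norm_eq_abs]
      rw [this]
      rw [← NNReal.coe_lt_coe]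
      simpa [Real.norm_eq_abs] using hev i
    exact lt_of_le_of_lt hle (by exact_mod_cast hmlt)

/-- Existence of a convex decomposition of `f` implies walk-summability of `Γ`:
the spectral radius of `|I − Γ|` is less than 1. -/
theorem stmt11 {n : ℕ} (Γ : Matrix (Fin n) (Fin n) ℝ) (hsym : Γ.IsSymm)
    (hdiag : ∀ i, Γ i i = 1) (hpd : Γ.PosDef) (h : Fin n → ℝ)
    (hcd : ConvexDecomposable Γ h) :
    spectralRadius ℂ (((1 - Γ).map (fun a => |a|)).map (Complex.ofReal)) < 1 := by
  classical
  set N : Matrix (Fin n) (Fin n) ℝ := (1 - Γ).map (fun a => |a|) with hNdef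
  obtain ⟨A, α, β, γ, hApos, hpsd, hKEY⟩ := extract Γ h hcd
  have hC1 : ∀ p ∈ Finset.univ.filter (fun p : Fin n × Fin n => Adj Γ p.1 p.2 ∧ p.1 < p.2),
      β p.1 p.2 = Γ p.1 p.2 := fun p hp => cross_coeff Γ hsym A α β γ hKEY p hp
  have hGsym : ∀ i j, Γ i j = Γ j i := fun i j => Matrix.IsSymm.apply hsym j i
  have hNoff : ∀ i j, i ≠ j → N i j = |Γ i j| := by
    intro i j hij
    simp [hNdef, Matrix.map_apply, Matrix.sub_apply, Matrix.one_apply_ne hij]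
  have hNdiag : ∀ i, N i i = 0 := by
    intro i
    simp [hNdef, Matrix.map_apply, Matrix.sub_apply, Matrix.one_apply_eq, hdiag i]
  have hNnonneg : ∀ i j, 0 ≤ N i j := by
    intro i j
    simp only [hNdef, Matrix.map_apply]
    exact abs_nonneg _
  have hNsym' : ∀ i j, N i j = N j i := by
    intro i j
    rcases eq_or_ne i j with rfl | hij
    · rfl
    · rw [hNoff i j hij, hNoff j i hij.symm, hGsym]
  have hNherm : N.IsHermitian := by
    rw [Matrix.IsHermitian.ext_iff]
    intro i j
    simpa using hNsym' j i
  have hGz : ∀ i j, i ≠ j → ¬ Adj Γ i j → Γ i j = 0 := by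
    intro i j hij hnadj
    by_contra hz
    exact hnadj ⟨hij, hz⟩
  have hNz : ∀ i j, i ≠ j → ¬ Adj Γ i j → N i j = 0 := by
    intro i j hij hnadj
    rw [hNoff i j hij, hGz i j hij hnadj, abs_zero]
  -- key estimate
  have hstep : ∀ z : Fin n → ℝ,
      |z ⬝ᵥ N.mulVec z| ≤ (∑ i, z i ^ 2) - 2 * ∑ i, A i * z i ^ 2 := by
    intro z
    set y : Fin n → ℝ := fun t => |z t| with hydef
    have hynn : ∀ t, 0 ≤ y t := fun t => abs_nonneg _
    have habs : |z ⬝ᵥ N.mulVec z| ≤ y ⬝ᵥ N.mulVec y := by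
      simp only [dotProduct, mulVec]
      refine le_trans (Finset.abs_sum_le_sum_abs _ _) (Finset.sum_le_sum fun i _ => ?_)
      rw [abs_mul]
      refine mul_le_mul (le_of_eq rfl) ?_ (abs_nonneg _) (hynn i)
      refine le_trans (Finset.abs_sum_le_sum_abs _ _) (Finset.sum_le_sum fun j _ => ?_)
      rw [abs_mul, abs_of_nonneg (hNnonneg i j)]
    have hquadG := quad_expand Γ Γ hGsym hGz y
    have hquadN := quad_expand Γ N hNsym' hNz y
    have hdN : ∑ i, N i i * y i ^ 2 = 0 :=
      Finset.sum_eq_zero fun i _ => by rw [hNdiag i, zero_mul]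
    have hdG : ∑ i, Γ i i * y i ^ 2 = ∑ i, y i ^ 2 :=
      Finset.sum_congr rfl fun i _ => by rw [hdiag i, one_mul]
    rw [hdN, zero_add] at hquadN
    rw [hdG] at hquadG
    have hKy := hKEY y
    -- per-edge nonnegativity
    have hedge : 0 ≤ ∑ p ∈ Finset.univ.filter (fun p : Fin n × Fin n => Adj Γ p.1 p.2 ∧ p.1 < p.2),
        ((α p.1 p.2 * (y p.1) ^ 2 + β p.1 p.2 * (y p.1) * (y p.2) + γ p.1 p.2 * (y p.2) ^ 2)
          - Γ p.1 p.2 * y p.1 * y p.2 - N p.1 p.2 * y p.1 * y p.2) := by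
      refine Finset.sum_nonneg fun p hp => ?_
      obtain ⟨-, hadj, hlt⟩ := Finset.mem_filter.1 hp
      have hb := hC1 p hp
      have h1 := hpsd p.1 p.2 hadj (y p.1) (y p.2)
      have h2 := hpsd p.1 p.2 hadj (y p.1) (-(y p.2))
      have hNval : N p.1 p.2 = |β p.1 p.2| := by
        rw [hNoff p.1 p.2 (ne_of_lt hlt), hb]
      have hynn1 := hynn p.1
      have hynn2 := hynn p.2
      have hyy : 0 ≤ y p.1 * y p.2 := mul_nonneg hynn1 hynn2
      rw [hNval, ← hb]
      rcases abs_cases (β p.1 p.2) with ⟨he, -⟩ | ⟨he, -⟩ <;> rw [he] <;> nlinarith [h1, h2]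
    rw [Finset.sum_sub_distrib, Finset.sum_sub_distrib] at hedge
    have hy2 : ∑ i, y i ^ 2 = ∑ i, z i ^ 2 :=
      Finset.sum_congr rfl fun i _ => by rw [hydef]; simp [sq_abs]
    have hAy : ∑ i, A i * y i ^ 2 = ∑ i, A i * z i ^ 2 :=
      Finset.sum_congr rfl fun i _ => by rw [hydef]; simp [sq_abs]
    linarith [habs, hquadG, hquadN, hKy, hedge, hy2, hAy]
  -- the pairwise bound required by spec_bound
  have hbound : ∀ a b : Fin n → ℝ,
      |a ⬝ᵥ N.mulVec a + b ⬝ᵥ N.mulVec b| < ∑ i, (a i ^ 2 + b i ^ 2) ∨ (a = 0 ∧ b = 0) := by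
    intro a b
    by_cases hz : a = 0 ∧ b = 0
    · exact Or.inr hz
    · left
      have h1 := hstep a
      have h2 := hstep b
      have hnn : ∀ (w : Fin n → ℝ), 0 ≤ ∑ i, A i * w i ^ 2 := fun w =>
        Finset.sum_nonneg fun i _ => mul_nonneg (le_of_lt (hApos i)) (sq_nonneg _)
      have hpos : 0 < ∑ i, A i * a i ^ 2 + ∑ i, A i * b i ^ 2 := by
        rcases not_and_or.1 hz with ha | hb
        · obtain ⟨i, hi⟩ := Function.ne_iff.1 ha
          have hi' : a i ≠ 0 := by simpa using hi
          have hsq : 0 < a i ^ 2 := by rcases hi'.lt_or_gt with hlt | hlt <;> nlinarith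
          have : 0 < ∑ i, A i * a i ^ 2 :=
            Finset.sum_pos' (fun j _ => mul_nonneg (le_of_lt (hApos j)) (sq_nonneg _))
              ⟨i, Finset.mem_univ i, mul_pos (hApos i) hsq⟩
          linarith [hnn b]
        · obtain ⟨i, hi⟩ := Function.ne_iff.1 hb
          have hi' : b i ≠ 0 := by simpa using hi
          have hsq : 0 < b i ^ 2 := by rcases hi'.lt_or_gt with hlt | hlt <;> nlinarith
          have : 0 < ∑ i, A i * b i ^ 2 :=
            Finset.sum_pos' (fun j _ => mul_nonneg (le_of_lt (hApos j)) (sq_nonneg _))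
              ⟨i, Finset.mem_univ i, mul_pos (hApos i) hsq⟩
          linarith [hnn a]
      have htri : |a ⬝ᵥ N.mulVec a + b ⬝ᵥ N.mulVec b|
          ≤ |a ⬝ᵥ N.mulVec a| + |b ⬝ᵥ N.mulVec b| := abs_add_le _ _
      have hsum : ∑ i, (a i ^ 2 + b i ^ 2) = ∑ i, a i ^ 2 + ∑ i, b i ^ 2 :=
        Finset.sum_add_distrib
      rw [hsum]
      linarith [h1, h2, htri, hpos]
  exact spec_bound N hNherm hbound
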